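/- Let P be a Wasserstein contractive Markov kernel with invariant measure π and suppose E_1(x) ≤ c < ∞ for π-almost all x. Then for every f ∈ L₀ the unique Lipschitz solution u of Poisson's equation satisfies |u(x)| ≤ c·Λ·‖f‖_d for π-almost all x. -/

import Mathlib

open MeasureTheory ProbabilityTheory ENNReal Filter

noncomputable section

/-- `η` is a coupling of `μ` and `ν`. -/
def IsCoupling {X : Type*} [MeasurableSpace X] (η : Measure (X × X)) (μ ν : Measure X) : Prop :=
  η.map Prod.fst = μ ∧ η.map Prod.snd = ν

/-- The 1-Wasserstein distance between two measures, w.r.t. the metric of `X`. -/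
def wass {X : Type*} [MeasurableSpace X] [MetricSpace X] (μ ν : Measure X) : ℝ≥0∞ :=
  ⨅ η : {η : Measure (X × X) // IsCoupling η μ ν}, ∫⁻ p, edist p.1 p.2 ∂(η : Measure (X × X))

/-- The Kantorovich norm of a Markov kernel. -/
def tau {X : Type*} [MeasurableSpace X] [MetricSpace X] (K : Kernel X X) : ℝ≥0∞ :=
  ⨆ (x : X) (y : X) (_ : x ≠ y), wass (K x) (K y) / edist x y

/-- The `p`-eccentricity of `π` at `x₀`. -/
def ecc {X : Type*} [MeasurableSpace X] [MetricSpace X] (π : Measure X) (p : ℝ) (x₀ : X) : ℝ≥0∞ :=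
  ∫⁻ y, edist x₀ y ^ p ∂π

/-- The Lipschitz seminorm `‖f‖_d` (valued in `ℝ≥0∞`). -/
def elip {X : Type*} [MetricSpace X] (f : X → ℝ) : ℝ≥0∞ :=
  ⨆ (x : X) (y : X) (_ : x ≠ y), ENNReal.ofReal |f x - f y| / edist x y

/-- Membership in the Banach space `L₀` of centred measurable Lipschitz functions. -/
def MemL0 {X : Type*} [MeasurableSpace X] [MetricSpace X] (π : Measure X) (f : X → ℝ) : Prop :=
  Measurable f ∧ (∃ L : ℝ, ∀ x y, |f x - f y| ≤ L * dist x y) ∧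
    Integrable f π ∧ ∫ x, f x ∂π = 0

/-- Iterates of a Markov kernel. -/
def kpow {X : Type*} [MeasurableSpace X] (P : Kernel X X) : ℕ → Kernel X X
  | 0 => Kernel.id
  | n + 1 => (kpow P n) ∘ₖ P

/-- The first eccentricity `E₁(x) = ∫ d(x,y) π(dy)`. -/
def eccOne {X : Type*} [MeasurableSpace X] [MetricSpace X] (π : Measure X) (x : X) : ℝ≥0∞ :=
  ∫⁻ y, edist x y ∂π
section Basic

variable {X : Type*} [MeasurableSpace X] [MetricSpace X] [SecondCountableTopology X] [BorelSpace X]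

set_option linter.unusedSectionVars false

lemma wass_le {μ ν : Measure X} {η : Measure (X × X)} (h : IsCoupling η μ ν) :
    wass μ ν ≤ ∫⁻ p, edist p.1 p.2 ∂η :=
  iInf_le (fun η : {η : Measure (X × X) // IsCoupling η μ ν} =>
    ∫⁻ p, edist p.1 p.2 ∂(η : Measure (X × X))) ⟨η, h⟩

lemma isCoupling_prod (μ ν : Measure X) [IsProbabilityMeasure μ] [IsProbabilityMeasure ν] :
    IsCoupling (μ.prod ν) μ ν := by
  constructor
  · rw [Measure.map_fst_prod, measure_univ, one_smul]
  · rw [Measure.map_snd_prod, measure_univ, one_smul]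

instance coupling_nonempty (μ ν : Measure X) [IsProbabilityMeasure μ] [IsProbabilityMeasure ν] :
    Nonempty {η : Measure (X × X) // IsCoupling η μ ν} :=
  ⟨⟨μ.prod ν, isCoupling_prod μ ν⟩⟩

lemma wass_self (μ : Measure X) [IsProbabilityMeasure μ] : wass μ μ = 0 := by
  have hmd : Measurable fun x : X => (x, x) := measurable_id.prodMk measurable_id
  have hcoup : IsCoupling (μ.map fun x => (x, x)) μ μ := by
    constructor
    · rw [Measure.map_map measurable_fst hmd]; exact Measure.map_id'
    · rw [Measure.map_map measurable_snd hmd]; exact Measure.map_id'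
  refine le_antisymm ?_ zero_le
  refine le_trans (wass_le hcoup) ?_
  rw [lintegral_map measurable_edist hmd]
  simp

/-- Transfer of a 1-Lipschitz `ℝ≥0∞`-valued integral along a coupling. -/
lemma lintegral_le_wass {μ ν : Measure X} [IsProbabilityMeasure μ] [IsProbabilityMeasure ν]
    {g : X → ℝ≥0∞} (hgm : Measurable g) (hlip : ∀ a b, g a ≤ g b + edist a b) :
    ∫⁻ y, g y ∂μ ≤ (∫⁻ y, g y ∂ν) + wass μ ν := by
  have key : ∀ η : {η : Measure (X × X) // IsCoupling η μ ν},
      ∫⁻ y, g y ∂μ ≤ (∫⁻ y, g y ∂ν) + ∫⁻ p, edist p.1 p.2 ∂(η : Measure (X × X)) := by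
    rintro ⟨η, h1, h2⟩
    show ∫⁻ y, g y ∂μ ≤ (∫⁻ y, g y ∂ν) + ∫⁻ p, edist p.1 p.2 ∂η
    have e1 : ∫⁻ y, g y ∂μ = ∫⁻ p, g p.1 ∂η := by
      rw [← h1, lintegral_map hgm measurable_fst]
    have e2 : ∫⁻ y, g y ∂ν = ∫⁻ p, g p.2 ∂η := by
      rw [← h2, lintegral_map hgm measurable_snd]
    rw [e1, e2, ← lintegral_add_left (show Measurable fun p : X × X => g p.2 from hgm.comp measurable_snd)]
    exact lintegral_mono fun p => hlip p.1 p.2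
  rw [wass, ENNReal.add_iInf]
  exact le_iInf key

lemma ofReal_abs_le_elip_mul (g : X → ℝ) (x y : X) :
    ENNReal.ofReal |g x - g y| ≤ elip g * edist x y := by
  rcases eq_or_ne x y with rfl | hxy
  · simp
  · have h1 : ENNReal.ofReal |g x - g y| / edist x y ≤ elip g := by
      refine le_trans ?_ (le_iSup _ x)
      refine le_trans ?_ (le_iSup _ y)
      exact le_iSup (fun _ : x ≠ y => ENNReal.ofReal |g x - g y| / edist x y) hxy
    rw [← ENNReal.div_le_iff_le_mul (Or.inl ((edist_pos.2 hxy).ne')) (Or.inl (edist_ne_top x y))]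
    exact h1

lemma elip_le_of_lip {g : X → ℝ} {L : ℝ} (hL : 0 ≤ L) (h : ∀ x y, |g x - g y| ≤ L * dist x y) :
    elip g ≤ ENNReal.ofReal L := by
  refine iSup_le fun x => iSup_le fun y => iSup_le fun hxy => ?_
  rw [ENNReal.div_le_iff_le_mul (Or.inl ((edist_pos.2 hxy).ne')) (Or.inl (edist_ne_top x y)),
    edist_dist, ← ENNReal.ofReal_mul hL]
  exact ENNReal.ofReal_le_ofReal (h x y)

lemma abs_le_of_elip_le {g : X → ℝ} {C : ℝ≥0∞} (hC : C ≠ ∞) (h : elip g ≤ C) (x y : X) :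
    |g x - g y| ≤ C.toReal * dist x y := by
  have h1 : ENNReal.ofReal |g x - g y| ≤ C * edist x y :=
    le_trans (ofReal_abs_le_elip_mul g x y) (mul_le_mul_left h _)
  rw [edist_dist, ← ENNReal.ofReal_toReal hC, ← ENNReal.ofReal_mul ENNReal.toReal_nonneg] at h1
  rwa [ENNReal.ofReal_le_ofReal_iff (mul_nonneg ENNReal.toReal_nonneg dist_nonneg)] at h1

lemma wass_le_tau (K : Kernel X X) [IsMarkovKernel K] (x y : X) :
    wass (K x) (K y) ≤ tau K * edist x y := by
  rcases eq_or_ne x y with rfl | hxy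
  · simp [wass_self]
  · have h1 : wass (K x) (K y) / edist x y ≤ tau K := by
      refine le_trans ?_ (le_iSup _ x)
      refine le_trans ?_ (le_iSup _ y)
      exact le_iSup (fun _ : x ≠ y => wass (K x) (K y) / edist x y) hxy
    rwa [ENNReal.div_le_iff_le_mul (Or.inl ((edist_pos.2 hxy).ne'))
      (Or.inl (edist_ne_top x y))] at h1

/-- The Kantorovich–Rubinstein easy inequality. -/
lemma ofReal_abs_integral_sub_le {μ ν : Measure X} [IsProbabilityMeasure μ]
    [IsProbabilityMeasure ν] {g : X → ℝ} (hgm : Measurable g) {C : ℝ≥0∞} (hC : C ≠ ∞)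
    (hlip : ∀ a b, ENNReal.ofReal |g a - g b| ≤ C * edist a b)
    (hμ : Integrable g μ) (hν : Integrable g ν) :
    ENNReal.ofReal |(∫ y, g y ∂μ) - ∫ y, g y ∂ν| ≤ C * wass μ ν := by
  have key : ∀ η : {η : Measure (X × X) // IsCoupling η μ ν},
      ENNReal.ofReal |(∫ y, g y ∂μ) - ∫ y, g y ∂ν|
        ≤ C * ∫⁻ p, edist p.1 p.2 ∂(η : Measure (X × X)) := by
    rintro ⟨η, h1, h2⟩
    show ENNReal.ofReal |(∫ y, g y ∂μ) - ∫ y, g y ∂ν| ≤ C * ∫⁻ p, edist p.1 p.2 ∂η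
    have hη1 : Integrable (fun p : X × X => g p.1) η := by
      rw [← h1] at hμ
      exact (integrable_map_measure hgm.aestronglyMeasurable
        measurable_fst.aemeasurable).mp hμ
    have hη2 : Integrable (fun p : X × X => g p.2) η := by
      rw [← h2] at hν
      exact (integrable_map_measure hgm.aestronglyMeasurable
        measurable_snd.aemeasurable).mp hν
    have e1 : ∫ y, g y ∂μ = ∫ p, g p.1 ∂η := by
      rw [← h1, integral_map measurable_fst.aemeasurable hgm.aestronglyMeasurable]
    have e2 : ∫ y, g y ∂ν = ∫ p, g p.2 ∂η := by
      rw [← h2, integral_map measurable_snd.aemeasurable hgm.aestronglyMeasurable]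
    have hsub : Integrable (fun p : X × X => g p.1 - g p.2) η := hη1.sub hη2
    rw [e1, e2, ← integral_sub hη1 hη2]
    calc ENNReal.ofReal |∫ p, (g p.1 - g p.2) ∂η|
        ≤ ENNReal.ofReal (∫ p, |g p.1 - g p.2| ∂η) := by
          refine ENNReal.ofReal_le_ofReal ?_
          have := norm_integral_le_integral_norm (μ := η) (fun p : X × X => g p.1 - g p.2)
          simpa [Real.norm_eq_abs] using this
      _ = ∫⁻ p, ENNReal.ofReal |g p.1 - g p.2| ∂η := by
          rw [ofReal_integral_eq_lintegral_ofReal hsub.abs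
            (Filter.Eventually.of_forall fun p => abs_nonneg _)]
      _ ≤ ∫⁻ p, C * edist p.1 p.2 ∂η := lintegral_mono fun p => hlip p.1 p.2
      _ = C * ∫⁻ p, edist p.1 p.2 ∂η := lintegral_const_mul C measurable_edist
  rcases eq_or_ne C 0 with rfl | hC0
  · simpa using key (Classical.arbitrary _)
  · rw [wass, ENNReal.mul_iInf_of_ne hC0 hC]
    exact le_iInf key

end Basic
section Kern

variable {X : Type*} [MeasurableSpace X] [MetricSpace X] [SecondCountableTopology X] [BorelSpace X]

set_option linter.unusedSectionVars false

instance kpow_markov (P : Kernel X X) [IsMarkovKernel P] (n : ℕ) : IsMarkovKernel (kpow P n) := by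
  induction n with
  | zero => exact Kernel.isMarkovKernel_deterministic measurable_id
  | succ n ih => exact Kernel.IsMarkovKernel.comp (κ := P) (η := kpow P n)

lemma kpow_zero_apply (P : Kernel X X) (x : X) : kpow P 0 x = Measure.dirac x := by
  show Kernel.id x = _
  rw [Kernel.id_apply]

lemma kpow_one (P : Kernel X X) [IsMarkovKernel P] : kpow P 1 = P := by
  show Kernel.id ∘ₖ P = P
  exact Kernel.id_comp P

lemma kpow_succ_comm (P : Kernel X X) [IsMarkovKernel P] (n : ℕ) :
    kpow P (n + 1) = P ∘ₖ kpow P n := by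
  induction n with
  | zero => show Kernel.id ∘ₖ P = P ∘ₖ Kernel.id; rw [Kernel.id_comp, Kernel.comp_id]
  | succ n ih =>
      show kpow P (n + 1) ∘ₖ P = _
      rw [ih, Kernel.comp_assoc, ← ih]
      rfl

lemma kpow_add (P : Kernel X X) [IsMarkovKernel P] (a b : ℕ) :
    kpow P (a + b) = kpow P a ∘ₖ kpow P b := by
  induction b with
  | zero => rw [Nat.add_zero]; exact (Kernel.comp_id _).symm
  | succ b ih =>
      have : a + (b + 1) = (a + b) + 1 := by omega
      rw [this]
      show kpow P (a + b) ∘ₖ P = _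
      rw [ih, Kernel.comp_assoc]
      rfl

lemma kpow_apply_add (P : Kernel X X) [IsMarkovKernel P] (a b : ℕ) (x : X) :
    kpow P (a + b) x = (kpow P b x).bind (kpow P a) := by
  rw [kpow_add, Kernel.comp_apply]

lemma kpow_apply_succ (P : Kernel X X) [IsMarkovKernel P] (n : ℕ) (x : X) :
    kpow P (n + 1) x = (P x).bind (kpow P n) := by
  have := kpow_apply_add P n 1 x
  rw [kpow_one] at this
  exact this

lemma bind_kpow_invariant (P : Kernel X X) [IsMarkovKernel P] (π : Measure X)
    (hinv : π.bind P = π) (n : ℕ) : π.bind (kpow P n) = π := by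
  induction n with
  | zero =>
      have : (⇑(kpow P 0) : X → Measure X) = Measure.dirac := by
        funext x; exact kpow_zero_apply P x
      rw [this, Measure.bind_dirac]
  | succ n ih =>
      have : (⇑(kpow P (n + 1)) : X → Measure X) = fun x => (P x).bind (kpow P n) := by
        funext x; exact kpow_apply_succ P n x
      rw [this, ← Measure.bind_bind (Kernel.measurable P).aemeasurable (Kernel.measurable _).aemeasurable, hinv, ih]

lemma bind_kernel_eq_map_snd (μ : Measure X) [SFinite μ] (κ : Kernel X X) [IsSFiniteKernel κ] :
    μ.bind ⇑κ = (μ ⊗ₘ κ).map Prod.snd := by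
  ext s hs
  rw [Measure.bind_apply hs (Kernel.measurable κ).aemeasurable,
    Measure.map_apply measurable_snd hs,
    Measure.compProd_apply (measurable_snd hs)]
  rfl

lemma my_integral_bind (μ : Measure X) [SFinite μ] (κ : Kernel X X) [IsSFiniteKernel κ]
    {g : X → ℝ} (hgm : Measurable g) (hint : Integrable g (μ.bind ⇑κ)) :
    ∫ y, g y ∂(μ.bind ⇑κ) = ∫ x, ∫ y, g y ∂(κ x) ∂μ := by
  rw [bind_kernel_eq_map_snd] at hint ⊢
  rw [integral_map measurable_snd.aemeasurable hgm.aestronglyMeasurable]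
  have h2 : Integrable (fun p : X × X => g p.2) (μ ⊗ₘ κ) :=
    (integrable_map_measure hgm.aestronglyMeasurable measurable_snd.aemeasurable).mp hint
  exact Measure.integral_compProd h2

end Kern
section Moments

variable {X : Type*} [MeasurableSpace X] [MetricSpace X] [SecondCountableTopology X] [BorelSpace X]

set_option linter.unusedSectionVars false

lemma eccOne_le_one_add_ecc (π : Measure X) [IsProbabilityMeasure π] {p : ℝ} (hp : 1 ≤ p)
    (x₀ : X) : eccOne π x₀ ≤ 1 + ecc π p x₀ := by
  have hpt : ∀ y, edist x₀ y ≤ 1 + edist x₀ y ^ p := by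
    intro y
    rcases le_or_gt (edist x₀ y) 1 with h | h
    · exact le_trans h le_self_add
    · refine le_trans ?_ le_add_self
      calc edist x₀ y = edist x₀ y ^ (1 : ℝ) := (ENNReal.rpow_one _).symm
        _ ≤ edist x₀ y ^ p := ENNReal.rpow_le_rpow_of_exponent_le h.le hp
  calc eccOne π x₀ ≤ ∫⁻ y, (1 + edist x₀ y ^ p) ∂π := lintegral_mono hpt
    _ = 1 + ecc π p x₀ := by
        rw [lintegral_add_left measurable_const, lintegral_const, measure_univ, mul_one]
        rfl

lemma eccOne_measurable (π : Measure X) [SFinite π] : Measurable (eccOne π) :=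
  Measurable.lintegral_prod_right measurable_edist

lemma eccOne_lip (π : Measure X) [IsProbabilityMeasure π] (a b : X) :
    eccOne π a ≤ eccOne π b + edist a b := by
  calc eccOne π a ≤ ∫⁻ y, (edist b y + edist a b) ∂π := by
        refine lintegral_mono fun y => ?_
        calc edist a y ≤ edist a b + edist b y := edist_triangle a b y
          _ = edist b y + edist a b := add_comm _ _
    _ = eccOne π b + edist a b := by
        rw [lintegral_add_right _ measurable_const, lintegral_const, measure_univ, mul_one]
        rfl

lemma eccOne_ne_top (π : Measure X) [IsProbabilityMeasure π] {x₀ : X} (h : eccOne π x₀ ≠ ∞)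
    (x : X) : eccOne π x ≠ ∞ :=
  ne_top_of_le_ne_top (by simp [h, edist_ne_top]) (eccOne_lip π x x₀)

lemma integrable_of_lip (μ : Measure X) [IsProbabilityMeasure μ] {g : X → ℝ}
    (hgm : Measurable g) {L : ℝ} (hL : ∀ a b, |g a - g b| ≤ L * dist a b) (b : X)
    (hmom : ∫⁻ y, edist y b ∂μ ≠ ∞) : Integrable g μ := by
  refine ⟨hgm.aestronglyMeasurable, ?_⟩
  have hpt : ∀ y, (‖g y‖₊ : ℝ≥0∞) ≤ ENNReal.ofReal |g b| + ENNReal.ofReal (max L 0) * edist y b := by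
    intro y
    rw [← enorm_eq_nnnorm, Real.enorm_eq_ofReal_abs]
    have h1 : |g y| ≤ |g b| + max L 0 * dist y b := by
      have h2 : |g y - g b| ≤ max L 0 * dist y b :=
        le_trans (hL y b) (by
          have : L ≤ max L 0 := le_max_left _ _
          nlinarith [dist_nonneg (x := y) (y := b)])
      calc |g y| = |g b + (g y - g b)| := by ring_nf
        _ ≤ |g b| + |g y - g b| := abs_add_le _ _
        _ ≤ |g b| + max L 0 * dist y b := by linarith
    calc ENNReal.ofReal |g y| ≤ ENNReal.ofReal (|g b| + max L 0 * dist y b) :=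
          ENNReal.ofReal_le_ofReal h1
      _ = ENNReal.ofReal |g b| + ENNReal.ofReal (max L 0 * dist y b) := by
          rw [ENNReal.ofReal_add (abs_nonneg _)
            (mul_nonneg (le_max_right _ _) dist_nonneg)]
      _ = ENNReal.ofReal |g b| + ENNReal.ofReal (max L 0) * edist y b := by
          rw [ENNReal.ofReal_mul (le_max_right _ _), edist_dist]
  show HasFiniteIntegral g μ
  rw [hasFiniteIntegral_iff_norm]
  have : ∫⁻ a, ENNReal.ofReal ‖g a‖ ∂μ
      ≤ ∫⁻ y, (ENNReal.ofReal |g b| + ENNReal.ofReal (max L 0) * edist y b) ∂μ := by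
    refine lintegral_mono fun y => ?_
    rw [Real.norm_eq_abs, ← Real.enorm_eq_ofReal_abs, enorm_eq_nnnorm]
    exact hpt y
  refine lt_of_le_of_lt this ?_
  rw [lintegral_add_left measurable_const, lintegral_const, measure_univ, mul_one,
    lintegral_const_mul _ (show Measurable fun y : X => edist y b from measurable_edist.comp (measurable_id.prodMk measurable_const))]
  exact ENNReal.add_lt_top.2 ⟨ENNReal.ofReal_lt_top,
    ENNReal.mul_lt_top ENNReal.ofReal_lt_top (lt_top_iff_ne_top.2 hmom)⟩

variable (P : Kernel X X) [IsMarkovKernel P] (x₀ : X)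

lemma mom_measurable (n : ℕ) : Measurable fun x => ∫⁻ y, edist y x₀ ∂(kpow P n x) := by
  exact Measurable.lintegral_kernel_prod_right
    ((measurable_edist.comp (measurable_snd.prodMk measurable_const)))

lemma mom_one_affine (π : Measure X) [IsProbabilityMeasure π] (hinv : π.bind P = π)
    (htau : tau P < ∞) (hfin : eccOne π x₀ ≠ ∞) :
    ∃ A : ℝ≥0∞, A ≠ ∞ ∧ ∀ x, ∫⁻ y, edist y x₀ ∂(P x) ≤ A + A * edist x x₀ := by
  have hedm : Measurable fun y : X => edist y x₀ :=
    measurable_edist.comp (measurable_id.prodMk measurable_const)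
  have hμ : ∫⁻ x, (∫⁻ y, edist y x₀ ∂(P x)) ∂π = eccOne π x₀ := by
    rw [← Measure.lintegral_bind (Kernel.measurable P).aemeasurable hedm.aemeasurable, hinv]
    exact lintegral_congr fun y => edist_comm y x₀ ▸ rfl
  have hmeas : Measurable fun x => ∫⁻ y, edist y x₀ ∂(P x) := by
    have := mom_measurable P x₀ 1
    simpa [kpow_one] using this
  have hae : ∀ᵐ x ∂π, (∫⁻ y, edist y x₀ ∂(P x)) < ∞ := ae_lt_top hmeas (hμ ▸ hfin)
  obtain ⟨z, hz⟩ := hae.exists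
  refine ⟨(∫⁻ y, edist y x₀ ∂(P z)) + tau P * edist z x₀ + tau P, ?_, ?_⟩
  · exact ENNReal.add_ne_top.2 ⟨ENNReal.add_ne_top.2 ⟨hz.ne,
      ENNReal.mul_ne_top htau.ne (edist_ne_top _ _)⟩, htau.ne⟩
  · intro x
    have h1 : ∫⁻ y, edist y x₀ ∂(P x)
        ≤ (∫⁻ y, edist y x₀ ∂(P z)) + wass (P x) (P z) := by
      refine lintegral_le_wass hedm fun a b => ?_
      calc edist a x₀ ≤ edist a b + edist b x₀ := edist_triangle _ _ _
        _ = edist b x₀ + edist a b := add_comm _ _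
    have h2 : wass (P x) (P z) ≤ tau P * edist x z := wass_le_tau P x z
    have h3 : edist x z ≤ edist x x₀ + edist z x₀ := by
      calc edist x z ≤ edist x x₀ + edist x₀ z := edist_triangle _ _ _
        _ = edist x x₀ + edist z x₀ := by rw [edist_comm x₀ z]
    calc ∫⁻ y, edist y x₀ ∂(P x)
        ≤ (∫⁻ y, edist y x₀ ∂(P z)) + tau P * (edist x x₀ + edist z x₀) := by
          refine le_trans h1 (add_le_add_right ?_ _)
          exact le_trans h2 (mul_le_mul_right h3 _)
      _ = ((∫⁻ y, edist y x₀ ∂(P z)) + tau P * edist z x₀) + tau P * edist x x₀ := by ring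
      _ ≤ _ := by
          refine add_le_add ?_ (mul_le_mul_left ?_ _)
          · exact le_add_right le_rfl
          · exact le_add_left le_rfl

lemma mom_affine (π : Measure X) [IsProbabilityMeasure π] (hinv : π.bind P = π)
    (htau : tau P < ∞) (hfin : eccOne π x₀ ≠ ∞) (n : ℕ) :
    ∃ A : ℝ≥0∞, A ≠ ∞ ∧ ∀ x, ∫⁻ y, edist y x₀ ∂(kpow P n x) ≤ A + A * edist x x₀ := by
  obtain ⟨A₁, hA₁, hA₁le⟩ := mom_one_affine P x₀ π hinv htau hfin
  have hedm : Measurable fun y : X => edist y x₀ :=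
    measurable_edist.comp (measurable_id.prodMk measurable_const)
  induction n with
  | zero =>
      refine ⟨1, one_ne_top, fun x => ?_⟩
      rw [kpow_zero_apply, lintegral_dirac' _ hedm, one_mul]
      exact le_add_self
  | succ n ih =>
      obtain ⟨A, hA, hAle⟩ := ih
      refine ⟨A + A * A₁, ?_, fun x => ?_⟩
      · exact ENNReal.add_ne_top.2 ⟨hA, ENNReal.mul_ne_top hA hA₁⟩
      · have hrec : ∫⁻ y, edist y x₀ ∂(kpow P (n+1) x)
            = ∫⁻ z, (∫⁻ y, edist y x₀ ∂(kpow P n z)) ∂(P x) := by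
          rw [kpow_apply_succ, Measure.lintegral_bind (Kernel.measurable _).aemeasurable hedm.aemeasurable]
        rw [hrec]
        calc ∫⁻ z, (∫⁻ y, edist y x₀ ∂(kpow P n z)) ∂(P x)
            ≤ ∫⁻ z, (A + A * edist z x₀) ∂(P x) := lintegral_mono fun z => hAle z
          _ = A + A * ∫⁻ z, edist z x₀ ∂(P x) := by
              rw [lintegral_add_left measurable_const, lintegral_const, measure_univ, mul_one,
                lintegral_const_mul _ hedm]
          _ ≤ A + A * (A₁ + A₁ * edist x x₀) := by
              exact add_le_add_right (mul_le_mul_right (hA₁le x) _) _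
          _ = (A + A * A₁) + A * A₁ * edist x x₀ := by ring
          _ ≤ (A + A * A₁) + (A + A * A₁) * edist x x₀ := by
              exact add_le_add_right (mul_le_mul_left (le_add_left le_rfl)
                (edist x x₀)) _

lemma mom_ne_top (π : Measure X) [IsProbabilityMeasure π] (hinv : π.bind P = π)
    (htau : tau P < ∞) (hfin : eccOne π x₀ ≠ ∞) (n : ℕ) (x : X) :
    ∫⁻ y, edist y x₀ ∂(kpow P n x) ≠ ∞ := by
  obtain ⟨A, hA, hAle⟩ := mom_affine P x₀ π hinv htau hfin n
  exact ne_top_of_le_ne_top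
    (ENNReal.add_ne_top.2 ⟨hA, ENNReal.mul_ne_top hA (edist_ne_top _ _)⟩) (hAle x)

lemma lint_eccOne_le (π : Measure X) [IsProbabilityMeasure π] (μ : Measure X)
    [IsProbabilityMeasure μ] :
    ∫⁻ z, eccOne π z ∂μ ≤ eccOne π x₀ + ∫⁻ z, edist z x₀ ∂μ := by
  calc ∫⁻ z, eccOne π z ∂μ ≤ ∫⁻ z, (eccOne π x₀ + edist z x₀) ∂μ :=
        lintegral_mono fun z => eccOne_lip π z x₀
    _ = eccOne π x₀ + ∫⁻ z, edist z x₀ ∂μ := by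
        rw [lintegral_add_left measurable_const, lintegral_const, measure_univ, mul_one]

end Moments
/-- `Fk P g n x = ∫ g d(Pⁿ x)`, the action of the `n`-th kernel iterate on `g`. -/
def Fk {X : Type*} [MeasurableSpace X] [MetricSpace X] (P : Kernel X X) (g : X → ℝ)
    (n : ℕ) (x : X) : ℝ := ∫ y, g y ∂(kpow P n x)

section Iter

variable {X : Type*} [MeasurableSpace X] [MetricSpace X] [SecondCountableTopology X] [BorelSpace X]

set_option linter.unusedSectionVars false

variable (P : Kernel X X) [IsMarkovKernel P] (π : Measure X) [IsProbabilityMeasure π] (x₀ : X)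
  (hinv : π.bind ⇑P = π) (htau : tau P < ∞) (hfin : eccOne π x₀ ≠ ∞)
  {g : X → ℝ} (hgm : Measurable g) {L : ℝ} (hLip : ∀ a b, |g a - g b| ≤ L * dist a b)

include hinv htau hfin hgm hLip

lemma Fk_zero : Fk P g 0 = g := by
  funext x
  show ∫ y, g y ∂(kpow P 0 x) = g x
  rw [kpow_zero_apply, integral_dirac' _ _ hgm.stronglyMeasurable]

lemma Fk_meas (n : ℕ) : Measurable (Fk P g n) := by
  have : StronglyMeasurable (Function.uncurry fun (_ : X) (y : X) => g y) :=
    (hgm.comp measurable_snd).stronglyMeasurable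
  exact (MeasureTheory.StronglyMeasurable.integral_kernel_prod_right
    (κ := kpow P _) this).measurable

lemma mom'_ne_top (n : ℕ) (x : X) : ∫⁻ y, edist y x₀ ∂(kpow P n x) ≠ ∞ :=
  mom_ne_top P x₀ π hinv htau hfin n x

lemma Fk_integrable (n : ℕ) (x : X) : Integrable g (kpow P n x) :=
  integrable_of_lip _ hgm hLip x₀ (mom'_ne_top P π x₀ hinv htau hfin hgm hLip n x)

lemma Fk_succ (n : ℕ) (x : X) : Fk P g (n + 1) x = ∫ z, Fk P g n z ∂(P x) := by
  show ∫ y, g y ∂(kpow P (n+1) x) = _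
  rw [kpow_apply_succ]
  have hint : Integrable g ((P x).bind ⇑(kpow P n)) := by
    rw [← kpow_apply_succ]
    exact Fk_integrable P π x₀ hinv htau hfin hgm hLip (n+1) x
  exact my_integral_bind (P x) (kpow P n) hgm hint

lemma Fk_add (a b : ℕ) (x : X) : Fk P g (a + b) x = ∫ z, Fk P g a z ∂(kpow P b x) := by
  show ∫ y, g y ∂(kpow P (a+b) x) = _
  rw [kpow_apply_add]
  have hint : Integrable g ((kpow P b x).bind ⇑(kpow P a)) := by
    rw [← kpow_apply_add]
    exact Fk_integrable P π x₀ hinv htau hfin hgm hLip (a+b) x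
  exact my_integral_bind (kpow P b x) (kpow P a) hgm hint

lemma elip_Fk_zero : elip (Fk P g 0) = elip g := by rw [Fk_zero P π x₀ hinv htau hfin hgm hLip]

lemma elip_g_ne_top : elip g ≠ ∞ := by
  have h1 : elip g ≤ ENNReal.ofReal (max L 0) := by
    refine elip_le_of_lip (le_max_right _ _) fun x y => ?_
    exact le_trans (hLip x y) (mul_le_mul_of_nonneg_right (le_max_left _ _) dist_nonneg)
  exact ne_top_of_le_ne_top ENNReal.ofReal_ne_top h1

/-- One-step/`b`-step contraction of the Lipschitz seminorm. -/
lemma elip_Fk_step (a b : ℕ) (hfa : elip (Fk P g a) ≠ ∞) :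
    elip (Fk P g (a + b)) ≤ elip (Fk P g a) * tau (kpow P b) := by
  obtain ⟨ℓ, hℓ⟩ : ∃ ℓ : ℝ, ∀ u v, |Fk P g a u - Fk P g a v| ≤ ℓ * dist u v :=
    ⟨(elip (Fk P g a)).toReal, abs_le_of_elip_le hfa le_rfl⟩
  refine iSup_le fun x => iSup_le fun y => iSup_le fun hxy => ?_
  rw [ENNReal.div_le_iff_le_mul (Or.inl ((edist_pos.2 hxy).ne')) (Or.inl (edist_ne_top x y))]
  have hFm := Fk_meas P π x₀ hinv htau hfin hgm hLip a
  have hintx : Integrable (Fk P g a) (kpow P b x) :=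
    integrable_of_lip _ hFm hℓ x₀ (mom'_ne_top P π x₀ hinv htau hfin hgm hLip b x)
  have hinty : Integrable (Fk P g a) (kpow P b y) :=
    integrable_of_lip _ hFm hℓ x₀ (mom'_ne_top P π x₀ hinv htau hfin hgm hLip b y)
  have key : ENNReal.ofReal |Fk P g (a+b) x - Fk P g (a+b) y|
      ≤ elip (Fk P g a) * wass (kpow P b x) (kpow P b y) := by
    rw [Fk_add P π x₀ hinv htau hfin hgm hLip a b x,
      Fk_add P π x₀ hinv htau hfin hgm hLip a b y]
    exact ofReal_abs_integral_sub_le hFm hfa (ofReal_abs_le_elip_mul _) hintx hinty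
  calc ENNReal.ofReal |Fk P g (a+b) x - Fk P g (a+b) y|
      ≤ elip (Fk P g a) * wass (kpow P b x) (kpow P b y) := key
    _ ≤ elip (Fk P g a) * (tau (kpow P b) * edist x y) :=
        mul_le_mul_right (wass_le_tau _ x y) _
    _ = elip (Fk P g a) * tau (kpow P b) * edist x y := by ring

lemma elip_Fk_le_pow (n : ℕ) : elip (Fk P g n) ≤ elip g * tau P ^ n := by
  induction n with
  | zero => rw [elip_Fk_zero P π x₀ hinv htau hfin hgm hLip, pow_zero, mul_one]
  | succ n ih =>
      have hfa : elip (Fk P g n) ≠ ∞ :=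
        ne_top_of_le_ne_top (ENNReal.mul_ne_top (elip_g_ne_top P π x₀ hinv htau hfin hgm hLip)
          (ENNReal.pow_ne_top htau.ne)) ih
      have := elip_Fk_step P π x₀ hinv htau hfin hgm hLip n 1 hfa
      rw [kpow_one] at this
      calc elip (Fk P g (n + 1)) ≤ elip (Fk P g n) * tau P := this
        _ ≤ elip g * tau P ^ n * tau P := mul_le_mul_left ih _
        _ = elip g * tau P ^ (n + 1) := by ring

lemma elip_Fk_ne_top (n : ℕ) : elip (Fk P g n) ≠ ∞ :=
  ne_top_of_le_ne_top (ENNReal.mul_ne_top (elip_g_ne_top P π x₀ hinv htau hfin hgm hLip)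
    (ENNReal.pow_ne_top htau.ne)) (elip_Fk_le_pow P π x₀ hinv htau hfin hgm hLip n)

lemma Fk_lip (n : ℕ) : ∀ u v, |Fk P g n u - Fk P g n v|
    ≤ (elip (Fk P g n)).toReal * dist u v :=
  abs_le_of_elip_le (elip_Fk_ne_top P π x₀ hinv htau hfin hgm hLip n) le_rfl

lemma elip_Fk_le_tau (n : ℕ) : elip (Fk P g n) ≤ elip g * tau (kpow P n) := by
  have := elip_Fk_step P π x₀ hinv htau hfin hgm hLip 0 n
    (by rw [elip_Fk_zero P π x₀ hinv htau hfin hgm hLip]; exact elip_g_ne_top P π x₀ hinv htau hfin hgm hLip)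
  rw [Nat.zero_add, elip_Fk_zero P π x₀ hinv htau hfin hgm hLip] at this
  exact this

lemma elip_Fk_geom (m' : ℕ) (k r : ℕ) :
    elip (Fk P g (r + k * m')) ≤ elip (Fk P g r) * tau (kpow P m') ^ k := by
  induction k with
  | zero => rw [Nat.zero_mul, Nat.add_zero, pow_zero, mul_one]
  | succ k ih =>
      have heq : r + (k + 1) * m' = (r + k * m') + m' := by ring
      rw [heq]
      calc elip (Fk P g ((r + k * m') + m'))
          ≤ elip (Fk P g (r + k * m')) * tau (kpow P m') :=
            elip_Fk_step P π x₀ hinv htau hfin hgm hLip _ _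
              (elip_Fk_ne_top P π x₀ hinv htau hfin hgm hLip _)
        _ ≤ elip (Fk P g r) * tau (kpow P m') ^ k * tau (kpow P m') :=
            mul_le_mul_left ih _
        _ = elip (Fk P g r) * tau (kpow P m') ^ (k + 1) := by ring

end Iter
section Iter2

variable {X : Type*} [MeasurableSpace X] [MetricSpace X] [SecondCountableTopology X] [BorelSpace X]

set_option linter.unusedSectionVars false

variable (P : Kernel X X) [IsMarkovKernel P] (π : Measure X) [IsProbabilityMeasure π] (x₀ : X)
  (hinv : π.bind ⇑P = π) (htau : tau P < ∞) (hfin : eccOne π x₀ ≠ ∞)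
  {g : X → ℝ} (hgm : Measurable g) {L : ℝ} (hLip : ∀ a b, |g a - g b| ≤ L * dist a b)

include hinv htau hfin hgm hLip

lemma pi_mom_ne_top : ∫⁻ y, edist y x₀ ∂π ≠ ∞ := by
  have : ∫⁻ y, edist y x₀ ∂π = eccOne π x₀ := lintegral_congr fun y => edist_comm y x₀
  rw [this]; exact hfin

lemma g_int_pi : Integrable g π :=
  integrable_of_lip π hgm hLip x₀ (pi_mom_ne_top P π x₀ hinv htau hfin hgm hLip)

lemma Fk_int_pi (n : ℕ) : Integrable (Fk P g n) π :=
  integrable_of_lip π (Fk_meas P π x₀ hinv htau hfin hgm hLip n)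
    (Fk_lip P π x₀ hinv htau hfin hgm hLip n) x₀
    (pi_mom_ne_top P π x₀ hinv htau hfin hgm hLip)

lemma Fk_integral_pi (hg0 : ∫ y, g y ∂π = 0) (n : ℕ) : ∫ x, Fk P g n x ∂π = 0 := by
  have hb : Integrable g (π.bind ⇑(kpow P n)) := by
    rw [bind_kpow_invariant P π hinv n]
    exact g_int_pi P π x₀ hinv htau hfin hgm hLip
  calc ∫ x, Fk P g n x ∂π = ∫ y, g y ∂(π.bind ⇑(kpow P n)) :=
        (my_integral_bind π (kpow P n) hgm hb).symm
    _ = ∫ y, g y ∂π := by rw [bind_kpow_invariant P π hinv n]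
    _ = 0 := hg0

lemma Fk_center (hg0 : ∫ y, g y ∂π = 0) (n : ℕ) (x : X) :
    ENNReal.ofReal |Fk P g n x| ≤ elip (Fk P g n) * eccOne π x := by
  have hFint : Integrable (Fk P g n) π := Fk_int_pi P π x₀ hinv htau hfin hgm hLip n
  have heq : Fk P g n x = ∫ y, (Fk P g n x - Fk P g n y) ∂π := by
    rw [integral_sub (integrable_const _) hFint, integral_const, probReal_univ,
      Fk_integral_pi P π x₀ hinv htau hfin hgm hLip hg0 n]
    simp
  have hsubint : Integrable (fun y => Fk P g n x - Fk P g n y) π :=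
    (integrable_const _).sub hFint
  calc ENNReal.ofReal |Fk P g n x|
      = ENNReal.ofReal |∫ y, (Fk P g n x - Fk P g n y) ∂π| := by rw [← heq]
    _ ≤ ENNReal.ofReal (∫ y, |Fk P g n x - Fk P g n y| ∂π) := by
        refine ENNReal.ofReal_le_ofReal ?_
        have := norm_integral_le_integral_norm (μ := π) (fun y => Fk P g n x - Fk P g n y)
        simpa [Real.norm_eq_abs] using this
    _ = ∫⁻ y, ENNReal.ofReal |Fk P g n x - Fk P g n y| ∂π := by
        rw [ofReal_integral_eq_lintegral_ofReal hsubint.abs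
          (Filter.Eventually.of_forall fun y => abs_nonneg _)]
    _ ≤ ∫⁻ y, elip (Fk P g n) * edist x y ∂π :=
        lintegral_mono fun y => ofReal_abs_le_elip_mul _ x y
    _ = elip (Fk P g n) * eccOne π x := by
        rw [lintegral_const_mul _ (show Measurable fun y : X => edist x y from
          measurable_edist.comp (measurable_const.prodMk measurable_id))]
        rfl

end Iter2

section Geom

lemma geom_sum_ne_top {τ1 τm e : ℝ≥0∞} (m : ℕ) (hm : 0 < m) (hτ1 : τ1 ≠ ∞) (hτm : τm < 1)
    (he : e ≠ ∞) : ∑' n : ℕ, e * τ1 ^ (n % m) * τm ^ (n / m) ≠ ∞ := by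
  haveI : NeZero m := ⟨hm.ne'⟩
  set D : ℕ → ℝ≥0∞ := fun n => e * τ1 ^ (n % m) * τm ^ (n / m) with hD
  show ∑' n, D n ≠ ∞
  rw [← Equiv.tsum_eq (Nat.divModEquiv m).symm D]
  have hDval : ∀ p : ℕ × Fin m, D ((Nat.divModEquiv m).symm p)
      = (e * τ1 ^ (p.2 : ℕ)) * τm ^ p.1 := by
    rintro ⟨k, r⟩
    show D (k * m + (r : ℕ)) = _
    have h1 : (k * m + (r : ℕ)) % m = (r : ℕ) := by
      rw [Nat.add_comm, Nat.add_mul_mod_self_right]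
      exact Nat.mod_eq_of_lt r.isLt
    have h2 : (k * m + (r : ℕ)) / m = k := by
      rw [Nat.add_comm, Nat.add_mul_div_right _ _ hm, Nat.div_eq_of_lt r.isLt, Nat.zero_add]
    rw [hD]
    simp only [h1, h2]
  rw [tsum_congr hDval, ENNReal.tsum_prod']
  simp only
  have hswap : ∀ k : ℕ, ∑' r : Fin m, (e * τ1 ^ (r : ℕ)) * τm ^ k
      = (∑' r : Fin m, e * τ1 ^ (r : ℕ)) * τm ^ k := fun k => ENNReal.tsum_mul_right
  rw [tsum_congr hswap, ENNReal.tsum_mul_left]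
  refine ENNReal.mul_ne_top ?_ ?_
  · rw [tsum_fintype]
    refine (ENNReal.sum_lt_top.2 fun r _ => ?_).ne
    exact ENNReal.mul_lt_top (lt_top_iff_ne_top.2 he)
      (ENNReal.pow_lt_top (lt_top_iff_ne_top.2 hτ1))
  · rw [ENNReal.tsum_geometric]
    refine ENNReal.inv_ne_top.2 ?_
    rw [Ne, tsub_eq_zero_iff_le]
    exact not_le.2 hτm

end Geom
/-- if `E₁(x) ≤ c` for `π`-almost all `x`, the unique Lipschitz solution of
Poisson's equation satisfies `|u(x)| ≤ c Λ ‖f‖_d` for `π`-almost all `x`. -/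
theorem poisson_solution_Linfty_bound {X : Type*} [MeasurableSpace X] [MetricSpace X]
    [PolishSpace X] [BorelSpace X]
    (π : Measure X) [IsProbabilityMeasure π]
    (P : Kernel X X) [IsMarkovKernel P] (hinv : π.bind P = π)
    (htau : tau P < ∞) (m : ℕ) (hm : 0 < m) (hcontr : tau (kpow P m) < 1)
    (p : ℝ) (hp : 1 ≤ p) (x₀ : X) (hE : ecc π p x₀ < ∞)
    (c : ℝ) (hc : 0 < c) (hE₁ : ∀ᵐ x ∂π, eccOne π x ≤ ENNReal.ofReal c)
    (f : X → ℝ) (hf : MemL0 π f) :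
    ∃ u : X → ℝ,
      (MemL0 π u ∧ ∀ x, u x - ∫ y, u y ∂(P x) = f x) ∧
      (∀ᵐ x ∂π, ENNReal.ofReal |u x| ≤
        ENNReal.ofReal c * (∑' n : ℕ, tau (kpow P n)) * elip f) ∧
      ∀ v : X → ℝ, (MemL0 π v ∧ ∀ x, v x - ∫ y, v y ∂(P x) = f x) → v = u := by
  obtain ⟨hfm, ⟨L, hLip⟩, hfint, hf0⟩ := hf
  have hfin : eccOne π x₀ ≠ ∞ := by
    refine ne_top_of_le_ne_top ?_ (eccOne_le_one_add_ecc π hp x₀)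
    exact (ENNReal.add_lt_top.2 ⟨ENNReal.one_lt_top, hE⟩).ne
  have hWne : ∀ x, eccOne π x ≠ ∞ := eccOne_ne_top π hfin
  have hπmom : ∫⁻ y, edist y x₀ ∂π ≠ ∞ :=
    pi_mom_ne_top P π x₀ hinv htau hfin hfm hLip
  set D : ℕ → ℝ≥0∞ := fun n => elip f * tau P ^ (n % m) * tau (kpow P m) ^ (n / m) with hDdef
  have helipf : elip f ≠ ∞ := elip_g_ne_top P π x₀ hinv htau hfin hfm hLip
  have hτm_ne : tau (kpow P m) ≠ ∞ := (hcontr.trans ENNReal.one_lt_top).ne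
  have hDn : ∀ n, D n ≠ ∞ := fun n =>
    ENNReal.mul_ne_top (ENNReal.mul_ne_top helipf (ENNReal.pow_ne_top htau.ne))
      (ENNReal.pow_ne_top hτm_ne)
  have hDsum : ∑' n, D n ≠ ∞ := geom_sum_ne_top m hm htau.ne hcontr helipf
  have helipFk_le_D : ∀ n, elip (Fk P f n) ≤ D n := by
    intro n
    have h1 := elip_Fk_geom P π x₀ hinv htau hfin hfm hLip m (n / m) (n % m)
    rw [Nat.mod_add_div' n m] at h1
    exact le_trans h1
      (mul_le_mul_left (elip_Fk_le_pow P π x₀ hinv htau hfin hfm hLip (n % m)) _)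
  have hptBound : ∀ n x, ENNReal.ofReal |Fk P f n x| ≤ D n * eccOne π x := fun n x =>
    le_trans (Fk_center P π x₀ hinv htau hfin hfm hLip hf0 n x)
      (mul_le_mul_left (helipFk_le_D n) _)
  have habs_le : ∀ n x, |Fk P f n x| ≤ (D n * eccOne π x).toReal := by
    intro n x
    have h2 := ENNReal.toReal_mono (ENNReal.mul_ne_top (hDn n) (hWne x)) (hptBound n x)
    rwa [ENNReal.toReal_ofReal (abs_nonneg _)] at h2
  have hDWsum : ∀ x, ∑' n, D n * eccOne π x ≠ ∞ := by
    intro x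
    rw [ENNReal.tsum_mul_right]
    exact ENNReal.mul_ne_top hDsum (hWne x)
  have hsummable_abs : ∀ x, Summable fun n => |Fk P f n x| := fun x =>
    Summable.of_nonneg_of_le (fun n => abs_nonneg _) (fun n => habs_le n x)
      (ENNReal.summable_toReal (hDWsum x))
  have hsummable : ∀ x, Summable fun n => Fk P f n x := fun x => (hsummable_abs x).of_abs
  set u : X → ℝ := fun x => ∑' n, Fk P f n x with hu_def
  -- measurability
  have humeas : Measurable u := by
    have hpart : ∀ N : ℕ, Measurable fun x => ∑ n ∈ Finset.range N, Fk P f n x :=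
      fun N => Finset.measurable_sum _ fun n _ => Fk_meas P π x₀ hinv htau hfin hfm hLip n
    refine measurable_of_tendsto_metrizable hpart ?_
    rw [tendsto_pi_nhds]
    exact fun x => (hsummable x).hasSum.tendsto_sum_nat
  -- Lipschitz property of u
  have hulip : ∀ a b, |u a - u b| ≤ (∑' n, D n).toReal * dist a b := by
    intro a b
    have hsub : HasSum (fun n => Fk P f n a - Fk P f n b) (u a - u b) :=
      (hsummable a).hasSum.sub (hsummable b).hasSum
    have habs' : ∀ n, |Fk P f n a - Fk P f n b| ≤ (D n * edist a b).toReal := by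
      intro n
      have h1 : ENNReal.ofReal |Fk P f n a - Fk P f n b| ≤ D n * edist a b :=
        le_trans (ofReal_abs_le_elip_mul _ a b) (mul_le_mul_left (helipFk_le_D n) _)
      have h2 := ENNReal.toReal_mono (ENNReal.mul_ne_top (hDn n) (edist_ne_top a b)) h1
      rwa [ENNReal.toReal_ofReal (abs_nonneg _)] at h2
    have hsumm2 : Summable fun n => (D n * edist a b).toReal := by
      refine ENNReal.summable_toReal ?_
      rw [ENNReal.tsum_mul_right]
      exact ENNReal.mul_ne_top hDsum (edist_ne_top a b)
    have hsummabs : Summable fun n => |Fk P f n a - Fk P f n b| :=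
      Summable.of_nonneg_of_le (fun n => abs_nonneg _) habs' hsumm2
    calc |u a - u b| = |∑' n, (Fk P f n a - Fk P f n b)| := by rw [hsub.tsum_eq]
      _ ≤ ∑' n, |Fk P f n a - Fk P f n b| := by
          have := norm_tsum_le_tsum_norm (f := fun n => Fk P f n a - Fk P f n b)
            (by simpa [Real.norm_eq_abs] using hsummabs)
          simpa [Real.norm_eq_abs] using this
      _ ≤ ∑' n, (D n * edist a b).toReal := Summable.tsum_le_tsum habs' hsummabs hsumm2
      _ = (∑' n, D n * edist a b).toReal :=
          (ENNReal.tsum_toReal_eq fun n => ENNReal.mul_ne_top (hDn n) (edist_ne_top a b)).symm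
      _ = ((∑' n, D n) * edist a b).toReal := by rw [ENNReal.tsum_mul_right]
      _ = (∑' n, D n).toReal * dist a b := by
          rw [ENNReal.toReal_mul, edist_dist, ENNReal.toReal_ofReal dist_nonneg]
  have huofReal : ∀ x, ENNReal.ofReal |u x| ≤ ∑' n, ENNReal.ofReal |Fk P f n x| := by
    intro x
    have h1 : |u x| ≤ ∑' n, |Fk P f n x| := by
      have := norm_tsum_le_tsum_norm (f := fun n => Fk P f n x)
        (by simpa [Real.norm_eq_abs] using hsummable_abs x)
      simpa [Real.norm_eq_abs] using this
    calc ENNReal.ofReal |u x| ≤ ENNReal.ofReal (∑' n, |Fk P f n x|) :=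
          ENNReal.ofReal_le_ofReal h1
      _ = ∑' n, ENNReal.ofReal |Fk P f n x| :=
          ENNReal.ofReal_tsum_of_nonneg (fun n => abs_nonneg _) (hsummable_abs x)
  have huW : ∀ x, ENNReal.ofReal |u x| ≤ (∑' n, D n) * eccOne π x := by
    intro x
    refine le_trans (huofReal x) ?_
    rw [← ENNReal.tsum_mul_right]
    exact Summable.tsum_le_tsum (fun n => hptBound n x) ENNReal.summable ENNReal.summable
  have hWint : ∫⁻ x, eccOne π x ∂π ≠ ∞ := by
    refine ne_top_of_le_ne_top ?_ (lint_eccOne_le x₀ π π)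
    exact (ENNReal.add_lt_top.2 ⟨lt_top_iff_ne_top.2 hfin, lt_top_iff_ne_top.2 hπmom⟩).ne
  have huint : Integrable u π := by
    refine ⟨humeas.aestronglyMeasurable, ?_⟩
    rw [hasFiniteIntegral_iff_norm]
    have hb : ∫⁻ x, ENNReal.ofReal ‖u x‖ ∂π ≤ ∫⁻ x, (∑' n, D n) * eccOne π x ∂π := by
      refine lintegral_mono fun x => ?_
      rw [Real.norm_eq_abs]
      exact huW x
    refine lt_of_le_of_lt hb ?_
    rw [lintegral_const_mul _ (eccOne_measurable π)]
    exact ENNReal.mul_lt_top (lt_top_iff_ne_top.2 hDsum) (lt_top_iff_ne_top.2 hWint)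
  have hu0 : ∫ x, u x ∂π = 0 := by
    have h := integral_tsum (μ := π) (f := fun n y => Fk P f n y)
      (fun n => (Fk_meas P π x₀ hinv htau hfin hfm hLip n).aestronglyMeasurable) ?_
    · calc ∫ x, u x ∂π = ∑' n, ∫ x, Fk P f n x ∂π := h
        _ = 0 := by
            rw [tsum_congr (Fk_integral_pi P π x₀ hinv htau hfin hfm hLip hf0)]
            exact tsum_zero
    · have hb : ∀ n, ∫⁻ x, (‖Fk P f n x‖₊ : ℝ≥0∞) ∂π ≤ D n * ∫⁻ x, eccOne π x ∂π := by
        intro n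
        calc ∫⁻ x, (‖Fk P f n x‖₊ : ℝ≥0∞) ∂π ≤ ∫⁻ x, D n * eccOne π x ∂π := by
              refine lintegral_mono fun x => ?_
              rw [← enorm_eq_nnnorm, Real.enorm_eq_ofReal_abs]
              exact hptBound n x
          _ = D n * ∫⁻ x, eccOne π x ∂π := lintegral_const_mul _ (eccOne_measurable π)
      refine ne_top_of_le_ne_top ?_ (Summable.tsum_le_tsum hb ENNReal.summable ENNReal.summable)
      rw [ENNReal.tsum_mul_right]
      exact ENNReal.mul_ne_top hDsum hWint
  have h1mom : ∀ x, ∫⁻ y, edist y x₀ ∂(P x) ≠ ∞ := by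
    intro x
    have := mom_ne_top P x₀ π hinv htau hfin 1 x
    rwa [kpow_one] at this
  have hWP : ∀ x, ∫⁻ z, eccOne π z ∂(P x) ≠ ∞ := fun x =>
    ne_top_of_le_ne_top
      ((ENNReal.add_lt_top.2 ⟨lt_top_iff_ne_top.2 hfin, lt_top_iff_ne_top.2 (h1mom x)⟩).ne)
      (lint_eccOne_le x₀ π (P x))
  have hPoisson : ∀ x, u x - ∫ y, u y ∂(P x) = f x := by
    intro x
    have hnorm : ∑' n, ∫⁻ y, (‖Fk P f n y‖₊ : ℝ≥0∞) ∂(P x) ≠ ∞ := by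
      have hb : ∀ n, ∫⁻ y, (‖Fk P f n y‖₊ : ℝ≥0∞) ∂(P x)
          ≤ D n * ∫⁻ z, eccOne π z ∂(P x) := by
        intro n
        calc ∫⁻ y, (‖Fk P f n y‖₊ : ℝ≥0∞) ∂(P x) ≤ ∫⁻ y, D n * eccOne π y ∂(P x) := by
              refine lintegral_mono fun y => ?_
              rw [← enorm_eq_nnnorm, Real.enorm_eq_ofReal_abs]
              exact hptBound n y
          _ = D n * ∫⁻ z, eccOne π z ∂(P x) := lintegral_const_mul _ (eccOne_measurable π)
      refine ne_top_of_le_ne_top ?_ (Summable.tsum_le_tsum hb ENNReal.summable ENNReal.summable)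
      rw [ENNReal.tsum_mul_right]
      exact ENNReal.mul_ne_top hDsum (hWP x)
    have hswap : ∫ y, u y ∂(P x) = ∑' n, ∫ y, Fk P f n y ∂(P x) :=
      integral_tsum (μ := P x) (f := fun n y => Fk P f n y)
        (fun n => (Fk_meas P π x₀ hinv htau hfin hfm hLip n).aestronglyMeasurable) hnorm
    have hstep : ∀ n, ∫ y, Fk P f n y ∂(P x) = Fk P f (n + 1) x := fun n =>
      (Fk_succ P π x₀ hinv htau hfin hfm hLip n x).symm
    have hzero_add : u x = Fk P f 0 x + ∑' n, Fk P f (n + 1) x :=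
      Summable.tsum_eq_zero_add (hsummable x)
    rw [hswap, tsum_congr hstep, hzero_add, add_sub_cancel_right]
    exact congrFun (Fk_zero P π x₀ hinv htau hfin hfm hLip) x
  refine ⟨u, ⟨⟨humeas, ⟨(∑' n, D n).toReal, hulip⟩, huint, hu0⟩, hPoisson⟩, ?_, ?_⟩
  · -- almost-everywhere bound
    filter_upwards [hE₁] with x hx
    have h1 : ENNReal.ofReal |u x| ≤ ∑' n, (elip f * eccOne π x) * tau (kpow P n) := by
      refine le_trans (huofReal x) (Summable.tsum_le_tsum (fun n => ?_) ENNReal.summable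
        ENNReal.summable)
      calc ENNReal.ofReal |Fk P f n x| ≤ elip (Fk P f n) * eccOne π x :=
            Fk_center P π x₀ hinv htau hfin hfm hLip hf0 n x
        _ ≤ (elip f * tau (kpow P n)) * eccOne π x :=
            mul_le_mul_left (elip_Fk_le_tau P π x₀ hinv htau hfin hfm hLip n) _
        _ = (elip f * eccOne π x) * tau (kpow P n) := by ring
    rw [ENNReal.tsum_mul_left] at h1
    calc ENNReal.ofReal |u x| ≤ (elip f * eccOne π x) * ∑' n, tau (kpow P n) := h1
      _ ≤ (elip f * ENNReal.ofReal c) * ∑' n, tau (kpow P n) :=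
          mul_le_mul_left (mul_le_mul_right hx _) _
      _ = ENNReal.ofReal c * (∑' n, tau (kpow P n)) * elip f := by ring
  · -- uniqueness
    rintro v ⟨⟨hvm, ⟨Lv, hvLip⟩, hvint, hv0⟩, hveq⟩
    have hwm : Measurable fun x => v x - u x := hvm.sub humeas
    set w : X → ℝ := fun x => v x - u x with hw
    have hwLip : ∀ a b, |w a - w b| ≤ (Lv + (∑' n, D n).toReal) * dist a b := by
      intro a b
      have h1 := hvLip a b
      have h2 := hulip a b
      have h3 : |w a - w b| ≤ |v a - v b| + |u a - u b| := by
        have h := abs_add_le (v a - v b) (-(u a - u b))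
        rw [abs_neg] at h
        refine le_trans (le_of_eq ?_) h
        show |v a - u a - (v b - u b)| = _
        ring_nf
      calc |w a - w b| ≤ |v a - v b| + |u a - u b| := h3
        _ ≤ Lv * dist a b + (∑' n, D n).toReal * dist a b := add_le_add h1 h2
        _ = (Lv + (∑' n, D n).toReal) * dist a b := by ring
    have hwharm : ∀ x, w x = ∫ y, w y ∂(P x) := by
      intro x
      have hvPx : Integrable v (P x) := integrable_of_lip (P x) hvm hvLip x₀ (h1mom x)
      have huPx : Integrable u (P x) := integrable_of_lip (P x) humeas hulip x₀ (h1mom x)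
      have h1 := hveq x
      have h2 := hPoisson x
      have h3 : ∫ y, w y ∂(P x) = (∫ y, v y ∂(P x)) - ∫ y, u y ∂(P x) :=
        integral_sub hvPx huPx
      show v x - u x = _
      rw [h3]
      linarith
    have hw0 : ∫ x, w x ∂π = 0 := by
      show ∫ x, (v x - u x) ∂π = 0
      rw [integral_sub hvint huint, hv0, hu0, sub_zero]
    have hFkw : ∀ n, Fk P w n = w := by
      intro n
      induction n with
      | zero => exact Fk_zero P π x₀ hinv htau hfin hwm hwLip
      | succ n ih =>
          funext x
          rw [Fk_succ P π x₀ hinv htau hfin hwm hwLip n x, ih]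
          exact (hwharm x).symm
    have hfin_w : elip w ≠ ∞ := elip_g_ne_top P π x₀ hinv htau hfin hwm hwLip
    have helipw : elip w = 0 := by
      by_contra h0
      have hstep := elip_Fk_step P π x₀ hinv htau hfin hwm hwLip 0 m
        (by rw [hFkw 0]; exact hfin_w)
      rw [Nat.zero_add, hFkw m, hFkw 0] at hstep
      have hlt : elip w * tau (kpow P m) < elip w * 1 :=
        ENNReal.mul_lt_mul_right h0 hfin_w hcontr
      rw [mul_one] at hlt
      exact lt_irrefl _ (lt_of_le_of_lt hstep hlt)
    have hconst : ∀ a b : X, w a = w b := by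
      intro a b
      have h1 := abs_le_of_elip_le (g := w) (C := 0) (by simp) helipw.le a b
      rw [ENNReal.toReal_zero, zero_mul, abs_nonpos_iff, sub_eq_zero] at h1
      exact h1
    funext x
    have h1 : w x = ∫ y, w y ∂π := by
      calc w x = ∫ _, w x ∂π := by rw [integral_const, probReal_univ]; simp
        _ = ∫ y, w y ∂π := integral_congr_ae (ae_of_all _ fun y => (hconst x y))
    have h2 : w x = 0 := by rw [h1, hw0]
    have h3 : v x - u x = 0 := h2
    linarith
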